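/- An element P of T^n(ℝ^d) with constant term 1 is group-like (i.e. P = exp(L) for some Lie polynomial L ∈ Lie^n(ℝ^d)) if and only if σ_{I⧢J}(P) = σ_I(P)·σ_J(P) for all words I, J with |I|+|J| ≤ n. -/

import Mathlib

open scoped BigOperators

section TruncatedTensorAlgebra

variable {K : Type*} [Field K] {d : ℕ}

/-- Concatenation (tensor) product on the tensor algebra, modelled as functions on words. -/
def tmul (f g : List (Fin d) → K) : List (Fin d) → K :=
  fun l => ∑ i ∈ Finset.range (l.length + 1), f (l.take i) * g (l.drop i)

/-- Truncation: kill all coordinates indexed by words of length `> n`. -/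
def trunc (n : ℕ) (f : List (Fin d) → K) : List (Fin d) → K :=
  fun l => if l.length ≤ n then f l else 0

/-- The product of the truncated tensor algebra `T^n(K^d)`. -/
def tmulT (n : ℕ) (f g : List (Fin d) → K) : List (Fin d) → K :=
  trunc n (tmul f g)

/-- The Lie bracket `[f,g] = f ⊗ g - g ⊗ f` in the truncated tensor algebra. -/
def lieT (n : ℕ) (f g : List (Fin d) → K) : List (Fin d) → K :=
  tmulT n f g - tmulT n g f

/-- The generator `e_i` of the tensor algebra. -/
def gen (i : Fin d) : List (Fin d) → K := fun l => if l = [i] then 1 else 0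

/-- The unit `1` of the tensor algebra. -/
def tone : List (Fin d) → K := fun l => if l = [] then 1 else 0

/-- `InLie d n K P` says that `P` belongs to the free Lie algebra `Lie^n(K^d)`, the
smallest Lie subalgebra of `T^n(K^d)` containing the generators `e_1, …, e_d`. -/
inductive InLie (d n : ℕ) (K : Type*) [Field K] : (List (Fin d) → K) → Prop
  | gen (i : Fin d) : InLie d n K (gen i)
  | zero : InLie d n K 0
  | add {f g : List (Fin d) → K} : InLie d n K f → InLie d n K g → InLie d n K (f + g)
  | smul (c : K) {f : List (Fin d) → K} : InLie d n K f → InLie d n K (c • f)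
  | bracket {f g : List (Fin d) → K} :
      InLie d n K f → InLie d n K g → InLie d n K (lieT n f g)

/-- Powers in the truncated tensor algebra. -/
def powT (n : ℕ) (f : List (Fin d) → K) : ℕ → (List (Fin d) → K)
  | 0 => tone
  | r + 1 => tmulT n f (powT n f r)

/-- The tensor exponential `exp(f) = ∑ f^{⊗ r}/r!` in `T^n(K^d)`. -/
noncomputable def texp (n : ℕ) (f : List (Fin d) → K) : List (Fin d) → K :=
  ∑ r ∈ Finset.range (n + 1), ((r.factorial : K)⁻¹) • powT n f r

/-- The tensor logarithm `log(1 + Q) = ∑_{r ≥ 1} (-1)^{r-1} Q^{⊗ r}/r` in `T^n(K^d)`. -/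
noncomputable def tlog (n : ℕ) (f : List (Fin d) → K) : List (Fin d) → K :=
  ∑ r ∈ Finset.Icc 1 n, (((-1 : K) ^ (r - 1)) / (r : K)) • powT n (f - tone) r

/-- The multiset of shuffles (interleavings) of two words. -/
def shuffles {α : Type*} : List α → List α → Multiset (List α)
  | [], l => {l}
  | l, [] => {l}
  | a :: as, b :: bs =>
      ((shuffles as (b :: bs)).map (a :: ·)) + ((shuffles (a :: as) bs).map (b :: ·))
  termination_by l₁ l₂ => l₁.length + l₂.length
  decreasing_by
    all_goals simp only [List.length_cons]
    all_goals omega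

/-- The shuffle linear form `σ_{I ⧢ J}` evaluated on a tensor `P`. -/
def shuffleForm (P : List (Fin d) → K) (I J : List (Fin d)) : K :=
  ((shuffles I J).map P).sum

end TruncatedTensorAlgebra

/-- A word is a Lyndon word if it is nonempty and strictly lexicographically smaller
than each of its proper rotations. -/
def IsLyndon {α : Type*} [LinearOrder α] (l : List α) : Prop :=
  l ≠ [] ∧ ∀ k : ℕ, 0 < k → k < l.length → l < l.rotate k

open Classical in
/-- The length of the longest proper Lyndon suffix of a word. -/
noncomputable def suffixLen {d : ℕ} (l : List (Fin d)) : ℕ :=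
  Nat.findGreatest (fun j => IsLyndon (l.drop (l.length - j))) (l.length - 1)

/-- Fuel-based recursion computing the Lyndon bracketing `b(I)`:
`b(i) = e_i` and `b(I) = [b(I₁), b(I₂)]` where `I = I₁I₂` with `I₂` the longest proper
Lyndon right factor of `I`. -/
noncomputable def bracketingFuel (K : Type*) [Field K] {d : ℕ} (n : ℕ) :
    ℕ → List (Fin d) → (List (Fin d) → K)
  | _, [i] => gen i
  | fuel + 1, l =>
      let m := min (max 1 (suffixLen l)) (l.length - 1)
      lieT n (bracketingFuel K n fuel (l.take (l.length - m)))
             (bracketingFuel K n fuel (l.drop (l.length - m)))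
  | 0, _ => 0

/-- The Lyndon bracketing `b(I)` of a word `I`, as an element of `T^n(K^d)`. -/
noncomputable def bracketing (K : Type*) [Field K] {d : ℕ} (n : ℕ) (l : List (Fin d)) :
    List (Fin d) → K :=
  bracketingFuel K n l.length l

section AuxBasic

variable {K : Type*} [Field K] {d : ℕ} {n : ℕ}

lemma aux_trunc_apply_of_le (h : List (Fin d) → K) {z : List (Fin d)} (hz : z.length ≤ n) :
    trunc n h z = h z := if_pos hz

/-- indicator of a single word -/
def aux_delta (u : List (Fin d)) : List (Fin d) → K := fun l => if l = u then 1 else 0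

lemma aux_gen_eq_delta (i : Fin d) : (gen i : List (Fin d) → K) = aux_delta [i] := rfl

lemma aux_tone_eq_delta : (tone : List (Fin d) → K) = aux_delta [] := rfl

lemma aux_tmul_add_left (f g h : List (Fin d) → K) :
    tmul (f + g) h = tmul f h + tmul g h := by
  funext z
  simp [tmul, add_mul, Finset.sum_add_distrib]

lemma aux_tmul_add_right (f g h : List (Fin d) → K) :
    tmul f (g + h) = tmul f g + tmul f h := by
  funext z
  simp [tmul, mul_add, Finset.sum_add_distrib]

lemma aux_tmul_smul_left (c : K) (f h : List (Fin d) → K) :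
    tmul (c • f) h = c • tmul f h := by
  funext z
  simp [tmul, Finset.mul_sum, mul_assoc]

lemma aux_tmul_smul_right (c : K) (f h : List (Fin d) → K) :
    tmul f (c • h) = c • tmul f h := by
  funext z
  simp [tmul, Finset.mul_sum]
  exact Finset.sum_congr rfl (fun i _ => by ring)

lemma aux_tmul_zero_left (h : List (Fin d) → K) : tmul 0 h = 0 := by
  funext z; simp [tmul]

lemma aux_tmul_zero_right (h : List (Fin d) → K) : tmul h 0 = 0 := by
  funext z; simp [tmul]

lemma aux_tmul_delta_delta (u v : List (Fin d)) :
    tmul (aux_delta u) (aux_delta v) = (aux_delta (u ++ v) : List (Fin d) → K) := by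
  funext z
  by_cases hz : z = u ++ v
  · subst hz
    rw [tmul]
    rw [Finset.sum_eq_single u.length]
    · simp [aux_delta, List.take_left, List.drop_left]
    · intro i hi hne
      have hi' : i ≤ u.length + v.length := by
        have := Finset.mem_range.mp hi
        simp [List.length_append] at this
        omega
      have : ((u ++ v).take i ≠ u) := by
        intro h
        apply hne
        have := congrArg List.length h
        simpa [List.length_take, List.length_append, Nat.min_eq_left hi'] using this
      simp [aux_delta, this]
    · intro h
      exact absurd (Finset.mem_range.mpr (by simp only [List.length_append]; omega)) h
  · rw [tmul]
    simp only [aux_delta, if_neg hz]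
    apply Finset.sum_eq_zero
    intro i _
    by_cases h1 : z.take i = u
    · by_cases h2 : z.drop i = v
      · exact absurd (by rw [← h1, ← h2, List.take_append_drop]) hz
      · simp [aux_delta, h2]
    · simp [aux_delta, h1]

lemma aux_tmul_tone_left (f : List (Fin d) → K) : tmul tone f = f := by
  funext z
  rw [tmul, Finset.sum_eq_single 0]
  · simp [tone]
  · intro i hi hne
    have : z.take i ≠ [] := by
      intro h
      apply hne
      have h2 : min i z.length = 0 := by
        simpa [List.length_take] using congrArg List.length h
      have := Finset.mem_range.mp hi
      omega
    simp [tone, this]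
  · intro h; exact absurd (Finset.mem_range.mpr (by omega)) h

lemma aux_tmul_tone_right (f : List (Fin d) → K) : tmul f tone = f := by
  funext z
  rw [tmul, Finset.sum_eq_single z.length]
  · simp [tone]
  · intro i hi hne
    have h1 : i < z.length + 1 := Finset.mem_range.mp hi
    have : z.drop i ≠ [] := by
      intro h
      apply hne
      have h2 : z.length - i = 0 := by
        simpa [List.length_drop] using congrArg List.length h
      omega
    simp [tone, this]
  · intro h; exact absurd (Finset.mem_range.mpr (by omega)) h

end AuxBasic
section AuxShuffles

variable {K : Type*} [Field K] {d : ℕ} {n : ℕ} {α : Type*}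

lemma aux_shuffles_nil_left (l : List α) : shuffles [] l = {l} := by
  rw [shuffles]

lemma aux_shuffles_nil_right (l : List α) : shuffles l [] = {l} := by
  cases l <;> (rw [shuffles]; try simp)

lemma aux_shuffles_cons_cons (a b : α) (as bs : List α) :
    shuffles (a :: as) (b :: bs) =
      ((shuffles as (b :: bs)).map (a :: ·)) + ((shuffles (a :: as) bs).map (b :: ·)) := by
  rw [shuffles]

lemma aux_length_shuffles (u v : List α) : ∀ w ∈ shuffles u v, w.length = u.length + v.length := by
  induction u, v using shuffles.induct with
  | case1 l =>
    intro w hw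
    simp [aux_shuffles_nil_left] at hw
    simp [hw]
  | case2 l _ =>
    intro w hw
    simp [aux_shuffles_nil_right] at hw
    simp [hw]
  | case3 a as b bs ih2 ih1 =>
    intro w hw
    rw [aux_shuffles_cons_cons] at hw
    rcases Multiset.mem_add.mp hw with hw | hw
    · obtain ⟨w', hw', rfl⟩ := Multiset.mem_map.mp hw
      have := ih2 w' hw'
      simp [this]; omega
    · obtain ⟨w', hw', rfl⟩ := Multiset.mem_map.mp hw
      have := ih1 w' hw'
      simp [this]; omega

/-- shuffleForm as an additive monoid hom in the tensor argument -/
def aux_sfHom (u v : List (Fin d)) : (List (Fin d) → K) →+ K where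
  toFun f := shuffleForm f u v
  map_zero' := by simp [shuffleForm]
  map_add' f g := by
    simp only [shuffleForm]
    have : (f + g) = (fun w => f w + g w) := rfl
    rw [this, Multiset.sum_map_add]

lemma aux_sf_add (f g : List (Fin d) → K) (u v : List (Fin d)) :
    shuffleForm (f + g) u v = shuffleForm f u v + shuffleForm g u v :=
  (aux_sfHom u v).map_add f g

lemma aux_sf_sub (f g : List (Fin d) → K) (u v : List (Fin d)) :
    shuffleForm (f - g) u v = shuffleForm f u v - shuffleForm g u v :=
  (aux_sfHom u v).map_sub f g

lemma aux_sf_zero (u v : List (Fin d)) : shuffleForm (0 : List (Fin d) → K) u v = 0 :=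
  (aux_sfHom u v).map_zero

lemma aux_sf_smul (c : K) (f : List (Fin d) → K) (u v : List (Fin d)) :
    shuffleForm (c • f) u v = c * shuffleForm f u v := by
  simp only [shuffleForm]
  have : (c • f) = (fun w => c * f w) := rfl
  rw [this, Multiset.sum_map_mul_left]

lemma aux_sf_sum {β : Type*} (s : Finset β) (F : β → List (Fin d) → K) (u v : List (Fin d)) :
    shuffleForm (∑ r ∈ s, F r) u v = ∑ r ∈ s, shuffleForm (F r) u v := by
  exact map_sum (aux_sfHom u v) F s

lemma aux_sf_congr {f g : List (Fin d) → K} (u v : List (Fin d))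
    (h : ∀ w : List (Fin d), w.length = u.length + v.length → f w = g w) :
    shuffleForm f u v = shuffleForm g u v := by
  simp only [shuffleForm]
  congr 1
  apply Multiset.map_congr rfl
  intro w hw
  exact h w (aux_length_shuffles u v w hw)

lemma aux_sf_nil_left (f : List (Fin d) → K) (v : List (Fin d)) :
    shuffleForm f [] v = f v := by
  simp [shuffleForm, aux_shuffles_nil_left]

lemma aux_sf_nil_right (f : List (Fin d) → K) (u : List (Fin d)) :
    shuffleForm f u [] = f u := by
  simp [shuffleForm, aux_shuffles_nil_right]

lemma aux_sf_cons_cons (f : List (Fin d) → K) (a b : Fin d) (as bs : List (Fin d)) :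
    shuffleForm f (a :: as) (b :: bs)
      = shuffleForm (fun w => f (a :: w)) as (b :: bs)
        + shuffleForm (fun w => f (b :: w)) (a :: as) bs := by
  simp [shuffleForm, aux_shuffles_cons_cons, Multiset.map_map, Function.comp]

lemma aux_sf_trunc (h : List (Fin d) → K) (u v : List (Fin d))
    (huv : u.length + v.length ≤ n) :
    shuffleForm (trunc n h) u v = shuffleForm h u v :=
  aux_sf_congr u v (fun w hw => aux_trunc_apply_of_le h (by omega))

end AuxShuffles
section AuxHom

variable {K : Type*} [Field K] {d : ℕ} {n : ℕ}

lemma aux_sf_add' (f g : List (Fin d) → K) (u v : List (Fin d)) :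
    shuffleForm (fun w => f w + g w) u v = shuffleForm f u v + shuffleForm g u v :=
  aux_sf_add f g u v

lemma aux_sf_mul_const (c : K) (f : List (Fin d) → K) (u v : List (Fin d)) :
    shuffleForm (fun w => c * f w) u v = c * shuffleForm f u v :=
  aux_sf_smul c f u v

lemma aux_tmul_cons (f g : List (Fin d) → K) (a : Fin d) (w : List (Fin d)) :
    tmul f g (a :: w) = f [] * g (a :: w) + tmul (fun l => f (a :: l)) g w := by
  show (∑ i ∈ Finset.range (w.length + 1 + 1), f ((a :: w).take i) * g ((a :: w).drop i)) = _
  rw [Finset.sum_range_succ']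
  simp only [List.take_succ_cons, List.drop_succ_cons, List.take_zero, List.drop_zero]
  rw [add_comm]
  rfl

/-- the splitting double sum -/
def aux_SF (f g : List (Fin d) → K) (I J : List (Fin d)) : K :=
  ∑ i ∈ Finset.range (I.length + 1), ∑ j ∈ Finset.range (J.length + 1),
    shuffleForm f (I.take i) (J.take j) * shuffleForm g (I.drop i) (J.drop j)

lemma aux_SF_cons_cons (f g : List (Fin d) → K) (a b : Fin d) (as bs : List (Fin d)) :
    aux_SF f g (a :: as) (b :: bs)
      = f [] * shuffleForm g (a :: as) (b :: bs)
        + aux_SF (fun w => f (a :: w)) g as (b :: bs)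
        + aux_SF (fun w => f (b :: w)) g (a :: as) bs := by
  have hrow : ∀ i' : ℕ,
      (∑ j ∈ Finset.range (bs.length + 1 + 1),
        shuffleForm f ((a :: as).take (i' + 1)) ((b :: bs).take j)
          * shuffleForm g ((a :: as).drop (i' + 1)) ((b :: bs).drop j))
      = (∑ j ∈ Finset.range (bs.length + 1 + 1),
          shuffleForm (fun w => f (a :: w)) (as.take i') ((b :: bs).take j)
            * shuffleForm g (as.drop i') ((b :: bs).drop j))
        + (∑ j' ∈ Finset.range (bs.length + 1),
            shuffleForm (fun w => f (b :: w)) ((a :: as).take (i' + 1)) (bs.take j')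
              * shuffleForm g ((a :: as).drop (i' + 1)) (bs.drop j')) := by
    intro i'
    rw [Finset.sum_range_succ' _ (bs.length + 1)]
    conv_rhs => rw [Finset.sum_range_succ' _ (bs.length + 1)]
    simp only [List.take_succ_cons, List.drop_succ_cons, List.take_zero, List.drop_zero,
      aux_sf_cons_cons, aux_sf_nil_right, add_mul, Finset.sum_add_distrib]
    ring
  have hrow0 :
      (∑ j ∈ Finset.range (bs.length + 1 + 1),
        shuffleForm f ((a :: as).take 0) ((b :: bs).take j)
          * shuffleForm g ((a :: as).drop 0) ((b :: bs).drop j))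
      = f [] * shuffleForm g (a :: as) (b :: bs)
        + (∑ j' ∈ Finset.range (bs.length + 1),
            shuffleForm (fun w => f (b :: w)) ((a :: as).take 0) (bs.take j')
              * shuffleForm g ((a :: as).drop 0) (bs.drop j')) := by
    rw [Finset.sum_range_succ' _ (bs.length + 1)]
    simp only [List.take_succ_cons, List.drop_succ_cons, List.take_zero, List.drop_zero,
      aux_sf_nil_left]
    rw [add_comm]
  have hTb : (∑ k ∈ Finset.range (as.length + 1), ∑ j' ∈ Finset.range (bs.length + 1),
        shuffleForm (fun w => f (b :: w)) ((a :: as).take (k + 1)) (bs.take j')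
          * shuffleForm g ((a :: as).drop (k + 1)) (bs.drop j'))
      + (∑ j' ∈ Finset.range (bs.length + 1),
            shuffleForm (fun w => f (b :: w)) ((a :: as).take 0) (bs.take j')
              * shuffleForm g ((a :: as).drop 0) (bs.drop j'))
      = aux_SF (fun w => f (b :: w)) g (a :: as) bs := by
    rw [aux_SF]
    show _ = ∑ i ∈ Finset.range (as.length + 1 + 1), _
    rw [Finset.sum_range_succ' _ (as.length + 1)]
  have hTa : (∑ k ∈ Finset.range (as.length + 1), ∑ j ∈ Finset.range (bs.length + 1 + 1),
        shuffleForm (fun w => f (a :: w)) (as.take k) ((b :: bs).take j)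
          * shuffleForm g (as.drop k) ((b :: bs).drop j))
      = aux_SF (fun w => f (a :: w)) g as (b :: bs) := by
    rw [aux_SF]
    show _ = ∑ i ∈ Finset.range (as.length + 1), ∑ j ∈ Finset.range (bs.length + 1 + 1), _
    rfl
  show (∑ i ∈ Finset.range (as.length + 1 + 1), ∑ j ∈ Finset.range (bs.length + 1 + 1),
    shuffleForm f ((a :: as).take i) ((b :: bs).take j)
      * shuffleForm g ((a :: as).drop i) ((b :: bs).drop j)) = _
  rw [Finset.sum_range_succ' _ (as.length + 1)]
  rw [Finset.sum_congr rfl (fun k _ => hrow k), hrow0, Finset.sum_add_distrib, hTa]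
  rw [← hTb]
  ring

lemma aux_H (I J : List (Fin d)) : ∀ (f g : List (Fin d) → K),
    shuffleForm (tmul f g) I J = aux_SF f g I J := by
  induction I, J using shuffles.induct with
  | case1 J =>
    intro f g
    rw [aux_sf_nil_left, aux_SF]
    simp only [List.length_nil, zero_add, Finset.range_one, Finset.sum_singleton,
      List.take_nil, List.drop_nil, List.take_zero, List.drop_zero, aux_sf_nil_left]
    rfl
  | case2 I _ =>
    intro f g
    rw [aux_sf_nil_right, aux_SF]
    simp only [List.length_nil, zero_add, Finset.range_one, Finset.sum_singleton,
      List.take_nil, List.drop_nil, List.take_zero, List.drop_zero, aux_sf_nil_right]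
    rfl
  | case3 a as b bs ih2 ih1 =>
    intro f g
    rw [aux_sf_cons_cons, aux_SF_cons_cons]
    have e1 : (fun w => tmul f g (a :: w))
        = (fun w => f [] * g (a :: w) + tmul (fun l => f (a :: l)) g w) := by
      funext w; exact aux_tmul_cons f g a w
    have e2 : (fun w => tmul f g (b :: w))
        = (fun w => f [] * g (b :: w) + tmul (fun l => f (b :: l)) g w) := by
      funext w; exact aux_tmul_cons f g b w
    rw [e1, e2, aux_sf_add', aux_sf_add', aux_sf_mul_const, aux_sf_mul_const,
      ih2 (fun l => f (a :: l)) g, ih1 (fun l => f (b :: l)) g,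
      aux_sf_cons_cons g a b as bs]
    ring

end AuxHom
section AuxPrim

variable {K : Type*} [Field K] {d : ℕ} {n : ℕ}

lemma aux_tmul_nil (f g : List (Fin d) → K) : tmul f g [] = f [] * g [] := by
  simp [tmul]

lemma aux_tmulT_nil (f g : List (Fin d) → K) : tmulT n f g [] = f [] * g [] := by
  rw [tmulT, aux_trunc_apply_of_le _ (by simp), aux_tmul_nil]

/-- `IsPrim n f`: constant term zero and primitive up to level `n`. -/
def IsPrim (n : ℕ) (f : List (Fin d) → K) : Prop :=
  f [] = 0 ∧ ∀ I J : List (Fin d), I ≠ [] → J ≠ [] → I.length + J.length ≤ n →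
    shuffleForm f I J = 0

lemma aux_prim_eval {f : List (Fin d) → K} (hf : IsPrim n f) (u v : List (Fin d))
    (huv : u.length + v.length ≤ n) :
    shuffleForm f u v = if v = [] then f u else if u = [] then f v else 0 := by
  by_cases hv : v = []
  · simp [hv, aux_sf_nil_right]
  · by_cases hu : u = []
    · simp [hu, hv, aux_sf_nil_left]
    · simp only [hu, hv, if_false]
      exact hf.2 u v hu hv huv

lemma aux_SF_prim_term {f g : List (Fin d) → K} (hf : IsPrim n f) (hg : IsPrim n g)
    {I J : List (Fin d)} (hI : I ≠ []) (hJ : J ≠ []) (hIJ : I.length + J.length ≤ n)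
    (i j : ℕ) (hi' : i ≤ I.length) (hj' : j ≤ J.length) :
    shuffleForm f (I.take i) (J.take j) * shuffleForm g (I.drop i) (J.drop j)
      = (if i = I.length ∧ j = 0 then f I * g J else 0)
        + (if i = 0 ∧ j = J.length then f J * g I else 0) := by
  have hlen1 : (I.take i).length + (J.take j).length ≤ n := by
    simp only [List.length_take]; omega
  have hlen2 : (I.drop i).length + (J.drop j).length ≤ n := by
    simp only [List.length_drop]; omega
  have hIlen : I.length ≠ 0 := fun h => hI (List.eq_nil_of_length_eq_zero h)
  have hJlen : J.length ≠ 0 := fun h => hJ (List.eq_nil_of_length_eq_zero h)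
  rw [aux_prim_eval hf _ _ hlen1, aux_prim_eval hg _ _ hlen2]
  rcases Nat.eq_zero_or_pos j with rfl | hjpos
  · simp only [List.take_zero, List.drop_zero, eq_self_iff_true, if_true, and_true, true_and]
    rw [if_neg hJ]
    by_cases hiI : i = I.length
    · subst hiI
      rw [List.take_length, if_pos (List.drop_length (l := I)), if_pos rfl,
        if_neg (show ¬(I.length = 0 ∧ 0 = J.length) from fun h => hIlen h.1)]
      ring
    · have hd : I.drop i ≠ [] := by
        intro h
        have h2 : I.length - i = 0 := by
          simpa [List.length_drop] using congrArg List.length h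
        omega
      rw [if_neg hd, if_neg hiI,
        if_neg (show ¬(i = 0 ∧ 0 = J.length) from fun h => hJlen h.2.symm)]
      ring
  · have ht : J.take j ≠ [] := by
      intro h
      have h2 : min j J.length = 0 := by
        simpa [List.length_take] using congrArg List.length h
      omega
    rw [if_neg ht]
    by_cases hi0 : i = 0
    · subst hi0
      simp only [List.take_zero, List.drop_zero, eq_self_iff_true, if_true, and_true, true_and]
      by_cases hjJ : j = J.length
      · subst hjJ
        rw [List.take_length, if_pos (List.drop_length (l := J)),
          if_neg (show ¬(0 = I.length ∧ J.length = 0) from fun h => hIlen h.1.symm),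
          if_pos rfl]
        ring
      · have hd : J.drop j ≠ [] := by
          intro h
          have h2 : J.length - j = 0 := by
            simpa [List.length_drop] using congrArg List.length h
          omega
        rw [if_neg hd, if_neg hI,
          if_neg (show ¬(0 = I.length ∧ j = 0) from fun h => hIlen h.1.symm),
          if_neg hjJ]
        ring
    · have ht2 : I.take i ≠ [] := by
        intro h
        have h2 : min i I.length = 0 := by
          simpa [List.length_take] using congrArg List.length h
        omega
      rw [if_neg ht2,
        if_neg (show ¬(i = I.length ∧ j = 0) from fun h => (Nat.pos_iff_ne_zero.mp hjpos) h.2),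
        if_neg (show ¬(i = 0 ∧ j = J.length) from fun h => hi0 h.1)]
      ring

lemma aux_sum_ite_single (c : K) (N b : ℕ) (hb : b ≤ N) :
    (∑ k ∈ Finset.range (N + 1), if k = b then c else 0) = c := by
  rw [Finset.sum_ite_eq' (Finset.range (N + 1)) b (fun _ => c)]
  simp [Nat.lt_succ_iff, hb]

lemma aux_SF_prim {f g : List (Fin d) → K} (hf : IsPrim n f) (hg : IsPrim n g)
    {I J : List (Fin d)} (hI : I ≠ []) (hJ : J ≠ []) (hIJ : I.length + J.length ≤ n) :
    aux_SF f g I J = f I * g J + f J * g I := by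
  rw [aux_SF]
  have hcong := fun (i : ℕ) (hi : i ∈ Finset.range (I.length + 1)) =>
    Finset.sum_congr rfl (fun j (hj : j ∈ Finset.range (J.length + 1)) =>
      aux_SF_prim_term hf hg hI hJ hIJ i j
        (by have := Finset.mem_range.mp hi; omega)
        (by have := Finset.mem_range.mp hj; omega))
  rw [Finset.sum_congr rfl hcong]
  simp only [Finset.sum_add_distrib, ite_and]
  have h1 : (∑ i ∈ Finset.range (I.length + 1), ∑ j ∈ Finset.range (J.length + 1),
      if i = I.length then if j = 0 then f I * g J else 0 else 0) = f I * g J := by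
    have hrow : ∀ i ∈ Finset.range (I.length + 1), (∑ j ∈ Finset.range (J.length + 1),
        if i = I.length then if j = 0 then f I * g J else 0 else 0)
        = if i = I.length then f I * g J else 0 := by
      intro i _
      by_cases h : i = I.length
      · simp only [h, if_true]
        exact aux_sum_ite_single _ _ 0 (by omega)
      · simp [h]
    rw [Finset.sum_congr rfl hrow, aux_sum_ite_single _ _ I.length (by omega)]
  have h2 : (∑ i ∈ Finset.range (I.length + 1), ∑ j ∈ Finset.range (J.length + 1),
      if i = 0 then if j = J.length then f J * g I else 0 else 0) = f J * g I := by
    have hrow : ∀ i ∈ Finset.range (I.length + 1), (∑ j ∈ Finset.range (J.length + 1),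
        if i = 0 then if j = J.length then f J * g I else 0 else 0)
        = if i = 0 then f J * g I else 0 := by
      intro i _
      by_cases h : i = 0
      · simp only [h, if_true]
        exact aux_sum_ite_single _ _ J.length (by omega)
      · simp [h]
    rw [Finset.sum_congr rfl hrow, aux_sum_ite_single _ _ 0 (by omega)]
  rw [h1, h2]

lemma aux_inlie_prim {f : List (Fin d) → K} (hf : InLie d n K f) : IsPrim n f := by
  induction hf with
  | gen i =>
    constructor
    · simp [gen]
    · intro I J hI hJ _
      have hlen : 2 ≤ I.length + J.length := by
        have := List.length_pos_iff.mpr hI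
        have := List.length_pos_iff.mpr hJ
        omega
      have : shuffleForm (gen i : List (Fin d) → K) I J
          = shuffleForm (0 : List (Fin d) → K) I J := by
        apply aux_sf_congr
        intro w hw
        have : w ≠ [i] := by
          intro h
          rw [h] at hw
          simp at hw
          omega
        simp [gen, this]
      rw [this, aux_sf_zero]
  | zero =>
    exact ⟨rfl, fun I J _ _ _ => aux_sf_zero I J⟩
  | add hf hg ihf ihg =>
    constructor
    · show _ + _ = (0 : K)
      rw [ihf.1, ihg.1, add_zero]
    · intro I J hI hJ h
      rw [aux_sf_add, ihf.2 I J hI hJ h, ihg.2 I J hI hJ h, add_zero]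
  | smul c hf ih =>
    constructor
    · show c • _ = (0 : K)
      rw [smul_eq_mul, ih.1, mul_zero]
    · intro I J hI hJ h
      rw [aux_sf_smul, ih.2 I J hI hJ h, mul_zero]
  | @bracket f' g' hf' hg' ihf ihg =>
    constructor
    · show _ - _ = (0 : K)
      rw [aux_tmulT_nil, aux_tmulT_nil]
      ring
    · intro I J hI hJ h
      have e : shuffleForm (lieT n f' g') I J
          = shuffleForm (tmul f' g') I J - shuffleForm (tmul g' f') I J := by
        rw [lieT, aux_sf_sub, tmulT, tmulT, aux_sf_trunc _ _ _ h, aux_sf_trunc _ _ _ h]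
      rw [e, aux_H, aux_H, aux_SF_prim ihf ihg hI hJ h, aux_SF_prim ihg ihf hI hJ h]
      ring

end AuxPrim
section AuxExp

variable {K : Type*} [Field K] {d : ℕ} {n : ℕ}

lemma aux_powT_support {L : List (Fin d) → K} (hL : L [] = 0) :
    ∀ r (z : List (Fin d)), z.length < r → powT n L r z = 0 := by
  intro r
  induction r with
  | zero => intro z hz; omega
  | succ r ih =>
    intro z hz
    show trunc n (tmul L (powT n L r)) z = 0
    rw [trunc]
    by_cases hzn : z.length ≤ n
    · simp only [hzn, if_true]
      rw [tmul]
      apply Finset.sum_eq_zero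
      intro i hi
      rcases Nat.eq_zero_or_pos i with rfl | hipos
      · simp [hL]
      · have : (z.drop i).length < r := by
          have := Finset.mem_range.mp hi
          simp [List.length_drop]; omega
        rw [ih _ this, mul_zero]
    · simp [hzn]

lemma aux_powT_nil {L : List (Fin d) → K} (hL : L [] = 0) (r : ℕ) :
    powT n L r ([] : List (Fin d)) = if r = 0 then 1 else 0 := by
  rcases Nat.eq_zero_or_pos r with rfl | hr
  · simp [powT, tone]
  · rw [aux_powT_support hL r [] (by simpa using hr), if_neg (by omega)]

lemma aux_powT_succ_apply (L : List (Fin d) → K) (k : ℕ) {z : List (Fin d)}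
    (hz : z.length ≤ n) :
    powT n L (k + 1) z
      = ∑ i ∈ Finset.range (z.length + 1), L (z.take i) * powT n L k (z.drop i) := by
  show trunc n (tmul L (powT n L k)) z = _
  rw [aux_trunc_apply_of_le _ hz]
  rfl

lemma aux_sf_tone (I J : List (Fin d)) :
    shuffleForm (tone : List (Fin d) → K) I J = tone I * tone J := by
  cases I with
  | nil => rw [aux_sf_nil_left]; simp [tone]
  | cons a as =>
    cases J with
    | nil => rw [aux_sf_nil_right]; simp [tone]
    | cons b bs =>
      rw [aux_sf_cons_cons]
      have h1 : (fun w => (tone : List (Fin d) → K) (a :: w)) = (0 : List (Fin d) → K) := by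
        funext w; simp [tone]
      have h2 : (fun w => (tone : List (Fin d) → K) (b :: w)) = (0 : List (Fin d) → K) := by
        funext w; simp [tone]
      rw [h1, h2, aux_sf_zero, aux_sf_zero]
      simp [tone]

lemma aux_SF_prim_left_term {L : List (Fin d) → K} (hL : IsPrim n L)
    (g : List (Fin d) → K) {I J : List (Fin d)} (hIJ : I.length + J.length ≤ n)
    (i j : ℕ) (hi' : i ≤ I.length) (hj' : j ≤ J.length) :
    shuffleForm L (I.take i) (J.take j) * shuffleForm g (I.drop i) (J.drop j)
      = (if j = 0 then L (I.take i) * shuffleForm g (I.drop i) J else 0)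
        + (if i = 0 then L (J.take j) * shuffleForm g I (J.drop j) else 0) := by
  have hlen1 : (I.take i).length + (J.take j).length ≤ n := by
    simp only [List.length_take]; omega
  rw [aux_prim_eval hL _ _ hlen1]
  rcases Nat.eq_zero_or_pos j with rfl | hj
  · simp only [List.take_zero, List.drop_zero, eq_self_iff_true, if_true]
    by_cases hi0 : i = 0
    · subst hi0
      simp [hL.1]
    · simp [hi0]
  · have ht : J.take j ≠ [] := by
      intro h
      have h2 : min j J.length = 0 := by
        simpa [List.length_take] using congrArg List.length h
      omega
    rw [if_neg ht, if_neg (Nat.pos_iff_ne_zero.mp hj)]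
    by_cases hi0 : i = 0
    · subst hi0
      simp only [List.take_zero, List.drop_zero, eq_self_iff_true, if_true, zero_add]
    · have ht2 : I.take i ≠ [] := by
        intro h
        have h2 : min i I.length = 0 := by
          simpa [List.length_take] using congrArg List.length h
        omega
      rw [if_neg ht2, if_neg hi0]
      ring

lemma aux_SF_prim_left {L : List (Fin d) → K} (hL : IsPrim n L)
    (g : List (Fin d) → K) {I J : List (Fin d)} (hIJ : I.length + J.length ≤ n) :
    aux_SF L g I J
      = (∑ i ∈ Finset.range (I.length + 1), L (I.take i) * shuffleForm g (I.drop i) J)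
        + (∑ j ∈ Finset.range (J.length + 1), L (J.take j) * shuffleForm g I (J.drop j)) := by
  rw [aux_SF]
  have hcong := fun (i : ℕ) (hi : i ∈ Finset.range (I.length + 1)) =>
    Finset.sum_congr rfl (fun j (hj : j ∈ Finset.range (J.length + 1)) =>
      aux_SF_prim_left_term hL g hIJ i j
        (by have := Finset.mem_range.mp hi; omega)
        (by have := Finset.mem_range.mp hj; omega))
  rw [Finset.sum_congr rfl hcong]
  simp only [Finset.sum_add_distrib]
  congr 1
  · apply Finset.sum_congr rfl
    intro i _
    exact aux_sum_ite_single _ _ 0 (by omega)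
  · have hrow : ∀ i ∈ Finset.range (I.length + 1),
        (∑ j ∈ Finset.range (J.length + 1),
          if i = 0 then L (J.take j) * shuffleForm g I (J.drop j) else 0)
        = if i = 0 then (∑ j ∈ Finset.range (J.length + 1),
            L (J.take j) * shuffleForm g I (J.drop j)) else 0 := by
      intro i _
      by_cases h : i = 0 <;> simp [h]
    rw [Finset.sum_congr rfl hrow, aux_sum_ite_single _ _ 0 (by omega)]

lemma aux_pascal (a b : ℕ → K) (r : ℕ) :
    (∑ k ∈ Finset.range (r + 1), (r.choose k : K) * (a (k + 1) * b (r - k)))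
      + (∑ k ∈ Finset.range (r + 1), (r.choose k : K) * (a k * b (r + 1 - k)))
    = ∑ k ∈ Finset.range (r + 2), ((r + 1).choose k : K) * (a k * b (r + 1 - k)) := by
  rw [Finset.sum_range_succ' (fun k => ((r + 1).choose k : K) * (a k * b (r + 1 - k))) (r + 1)]
  have h2 : (∑ k ∈ Finset.range (r + 1), (r.choose k : K) * (a k * b (r + 1 - k)))
      = (∑ k ∈ Finset.range r, (r.choose (k + 1) : K) * (a (k + 1) * b (r - k)))
        + (a 0 * b (r + 1)) := by
    rw [Finset.sum_range_succ' (fun k => (r.choose k : K) * (a k * b (r + 1 - k))) r]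
    congr 1
    · apply Finset.sum_congr rfl
      intro k _
      have : r + 1 - (k + 1) = r - k := by omega
      rw [this]
    · simp
  have h3 : (∑ k ∈ Finset.range (r + 1), (r.choose (k + 1) : K) * (a (k + 1) * b (r - k)))
      = ∑ k ∈ Finset.range r, (r.choose (k + 1) : K) * (a (k + 1) * b (r - k)) := by
    rw [Finset.sum_range_succ]
    simp [Nat.choose_succ_self]
  have h4 : ∀ k, (((r + 1).choose (k + 1) : K))
      = (r.choose k : K) + (r.choose (k + 1) : K) := by
    intro k
    rw [Nat.choose_succ_succ]
    push_cast
    ring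
  rw [h2]
  have h5 : (∑ k ∈ Finset.range (r + 1),
      ((r + 1).choose (k + 1) : K) * (a (k + 1) * b (r + 1 - (k + 1))))
      = (∑ k ∈ Finset.range (r + 1), (r.choose k : K) * (a (k + 1) * b (r - k)))
        + (∑ k ∈ Finset.range (r + 1), (r.choose (k + 1) : K) * (a (k + 1) * b (r - k))) := by
    rw [← Finset.sum_add_distrib]
    apply Finset.sum_congr rfl
    intro k _
    have : r + 1 - (k + 1) = r - k := by omega
    rw [this, h4 k]
    ring
  rw [h5, h3]
  have h6 : ((r + 1).choose 0 : K) * (a 0 * b (r + 1 - 0)) = a 0 * b (r + 1) := by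
    simp
  rw [h6]
  ring

lemma aux_powT_sf {L : List (Fin d) → K} (hL : IsPrim n L) :
    ∀ r (I J : List (Fin d)), I.length + J.length ≤ n →
      shuffleForm (powT n L r) I J
        = ∑ k ∈ Finset.range (r + 1),
            (r.choose k : K) * (powT n L k I * powT n L (r - k) J) := by
  intro r
  induction r with
  | zero =>
    intro I J _
    show shuffleForm (tone : List (Fin d) → K) I J = _
    rw [aux_sf_tone]
    simp [powT]
  | succ r ih =>
    intro I J hIJ
    have e1 : shuffleForm (powT n L (r + 1)) I J
        = shuffleForm (tmul L (powT n L r)) I J := by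
      show shuffleForm (trunc n (tmul L (powT n L r))) I J = _
      exact aux_sf_trunc _ _ _ hIJ
    rw [e1, aux_H, aux_SF_prim_left hL _ hIJ]
    have eI : ∀ i, i ∈ Finset.range (I.length + 1) →
        L (I.take i) * shuffleForm (powT n L r) (I.drop i) J
        = ∑ k ∈ Finset.range (r + 1),
            (r.choose k : K) * (L (I.take i) * powT n L k (I.drop i) * powT n L (r - k) J) := by
      intro i _
      rw [ih (I.drop i) J (by simp only [List.length_drop]; omega), Finset.mul_sum]
      apply Finset.sum_congr rfl
      intro k _
      ring
    have eJ : ∀ j, j ∈ Finset.range (J.length + 1) →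
        L (J.take j) * shuffleForm (powT n L r) I (J.drop j)
        = ∑ k ∈ Finset.range (r + 1),
            (r.choose k : K) * (powT n L k I * (L (J.take j) * powT n L (r - k) (J.drop j))) := by
      intro j _
      rw [ih I (J.drop j) (by simp only [List.length_drop]; omega), Finset.mul_sum]
      apply Finset.sum_congr rfl
      intro k _
      ring
    rw [Finset.sum_congr rfl eI, Finset.sum_congr rfl eJ, Finset.sum_comm,
      Finset.sum_comm (s := Finset.range (J.length + 1))]
    have eI2 : ∀ k ∈ Finset.range (r + 1),
        (∑ i ∈ Finset.range (I.length + 1),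
          (r.choose k : K) * (L (I.take i) * powT n L k (I.drop i) * powT n L (r - k) J))
        = (r.choose k : K) * (powT n L (k + 1) I * powT n L (r - k) J) := by
      intro k _
      rw [← Finset.mul_sum, ← Finset.sum_mul,
        ← aux_powT_succ_apply L k (show I.length ≤ n by omega)]
    have eJ2 : ∀ k ∈ Finset.range (r + 1),
        (∑ j ∈ Finset.range (J.length + 1),
          (r.choose k : K) * (powT n L k I * (L (J.take j) * powT n L (r - k) (J.drop j))))
        = (r.choose k : K) * (powT n L k I * powT n L (r - k + 1) J) := by
      intro k _
      rw [← Finset.mul_sum, ← Finset.mul_sum,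
        ← aux_powT_succ_apply L (r - k) (show J.length ≤ n by omega)]
    rw [Finset.sum_congr rfl eI2, Finset.sum_congr rfl eJ2]
    have : ∀ k ∈ Finset.range (r + 1),
        (r.choose k : K) * (powT n L k I * powT n L (r - k + 1) J)
        = (r.choose k : K) * (powT n L k I * powT n L (r + 1 - k) J) := by
      intro k hk
      have := Finset.mem_range.mp hk
      have e : r - k + 1 = r + 1 - k := by omega
      rw [e]
    rw [Finset.sum_congr rfl this]
    exact aux_pascal (fun k => powT n L k I) (fun m => powT n L m J) r

end AuxExp
section AuxExp2

variable {K : Type*} [Field K] [CharZero K] {d : ℕ} {n : ℕ}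

omit [CharZero K] in
lemma aux_texp_apply (L : List (Fin d) → K) (z : List (Fin d)) :
    texp n L z = ∑ r ∈ Finset.range (n + 1), (r.factorial : K)⁻¹ * powT n L r z := by
  rw [texp, Finset.sum_apply]
  rfl

lemma aux_fact_coeff {r k : ℕ} (hkr : k ≤ r) :
    (r.factorial : K)⁻¹ * (r.choose k : K)
      = (k.factorial : K)⁻¹ * ((r - k).factorial : K)⁻¹ := by
  have h := Nat.choose_mul_factorial_mul_factorial hkr
  have h' : ((r.choose k : K)) * (k.factorial : K) * ((r - k).factorial : K)
      = (r.factorial : K) := by exact_mod_cast congrArg (Nat.cast : ℕ → K) h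
  have h1 : (r.factorial : K) ≠ 0 := Nat.cast_ne_zero.mpr (Nat.factorial_ne_zero r)
  have h2 : (k.factorial : K) ≠ 0 := Nat.cast_ne_zero.mpr (Nat.factorial_ne_zero k)
  have h3 : ((r - k).factorial : K) ≠ 0 := Nat.cast_ne_zero.mpr (Nat.factorial_ne_zero (r - k))
  field_simp
  linear_combination h'

lemma aux_triangle_sum (N : ℕ) (T : ℕ → ℕ → K) :
    (∑ r ∈ Finset.range (N + 1), ∑ k ∈ Finset.range (r + 1), T k (r - k))
      = ∑ p ∈ (Finset.range (N + 1) ×ˢ Finset.range (N + 1)).filter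
          (fun p => p.1 + p.2 ≤ N), T p.1 p.2 := by
  rw [Finset.sum_sigma' (Finset.range (N + 1)) (fun r => Finset.range (r + 1))
    (fun r k => T k (r - k))]
  apply Finset.sum_nbij' (i := fun x : Σ _ : ℕ, ℕ => (x.2, x.1 - x.2))
    (j := fun p : ℕ × ℕ => ⟨p.1 + p.2, p.1⟩)
  · intro x hx
    rw [Finset.mem_sigma] at hx
    have h1 := Finset.mem_range.mp hx.1
    have h2 := Finset.mem_range.mp hx.2
    simp only [Finset.mem_filter, Finset.mem_product, Finset.mem_range]
    omega
  · intro p hp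
    simp only [Finset.mem_filter, Finset.mem_product, Finset.mem_range] at hp
    rw [Finset.mem_sigma]
    constructor <;> simp only [Finset.mem_range] <;> omega
  · intro x hx
    rw [Finset.mem_sigma] at hx
    have h2 := Finset.mem_range.mp hx.2
    have e1 : x.2 + (x.1 - x.2) = x.1 := by omega
    exact Sigma.ext e1 (by simp)
  · intro p hp
    simp
  · intro x hx
    rfl

lemma aux_texp_mult_of_prim {L : List (Fin d) → K} (hLp : IsPrim n L) :
    ∀ I J : List (Fin d), I.length + J.length ≤ n →
      shuffleForm (texp n L) I J = texp n L I * texp n L J := by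
  intro I J hIJ
  have hLHS : shuffleForm (texp n L) I J
      = ∑ r ∈ Finset.range (n + 1), ∑ k ∈ Finset.range (r + 1),
          ((k.factorial : K)⁻¹ * ((r - k).factorial : K)⁻¹)
            * (powT n L k I * powT n L (r - k) J) := by
    rw [texp, aux_sf_sum]
    apply Finset.sum_congr rfl
    intro r _
    rw [aux_sf_smul, aux_powT_sf hLp r I J hIJ, Finset.mul_sum]
    apply Finset.sum_congr rfl
    intro k hk
    have hkr : k ≤ r := by have := Finset.mem_range.mp hk; omega
    rw [← mul_assoc, aux_fact_coeff hkr]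
  rw [hLHS, aux_triangle_sum n (fun a b =>
      ((a.factorial : K)⁻¹ * (b.factorial : K)⁻¹) * (powT n L a I * powT n L b J))]
  rw [aux_texp_apply, aux_texp_apply, Finset.sum_mul_sum]
  have hgrid : (∑ a ∈ Finset.range (n + 1), ∑ b ∈ Finset.range (n + 1),
      ((a.factorial : K)⁻¹ * powT n L a I) * ((b.factorial : K)⁻¹ * powT n L b J))
      = ∑ p ∈ (Finset.range (n + 1) ×ˢ Finset.range (n + 1)),
          ((p.1.factorial : K)⁻¹ * (p.2.factorial : K)⁻¹)
            * (powT n L p.1 I * powT n L p.2 J) := by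
    rw [Finset.sum_product]
    apply Finset.sum_congr rfl
    intro a _
    apply Finset.sum_congr rfl
    intro b _
    ring
  rw [hgrid]
  rw [← Finset.sum_filter_add_sum_filter_not
    (Finset.range (n + 1) ×ˢ Finset.range (n + 1)) (fun p => p.1 + p.2 ≤ n)]
  have hzero : (∑ p ∈ (Finset.range (n + 1) ×ˢ Finset.range (n + 1)).filter
      (fun p => ¬ p.1 + p.2 ≤ n),
        ((p.1.factorial : K)⁻¹ * (p.2.factorial : K)⁻¹)
          * (powT n L p.1 I * powT n L p.2 J)) = 0 := by
    apply Finset.sum_eq_zero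
    intro p hp
    simp only [Finset.mem_filter, Finset.mem_product, Finset.mem_range] at hp
    have : I.length < p.1 ∨ J.length < p.2 := by omega
    rcases this with h | h
    · rw [aux_powT_support hLp.1 p.1 I h]
      ring
    · rw [aux_powT_support hLp.1 p.2 J h]
      ring
  rw [hzero, add_zero]

end AuxExp2
section AuxDynkin

variable {K : Type*} [Field K] {d : ℕ} {n : ℕ}

/-- deshuffle pairs of a word -/
def aux_desh : List (Fin d) → Multiset (List (Fin d) × List (Fin d))
  | [] => {([], [])}
  | a :: w => ((aux_desh w).map (fun p => (a :: p.1, p.2)))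
      + ((aux_desh w).map (fun p => (p.1, a :: p.2)))

lemma aux_desh_len : ∀ (w : List (Fin d)), ∀ p ∈ aux_desh w,
    p.1.length + p.2.length = w.length := by
  intro w
  induction w with
  | nil =>
    intro p hp
    simp [aux_desh] at hp
    simp [hp]
  | cons a w ih =>
    intro p hp
    rw [aux_desh] at hp
    rcases Multiset.mem_add.mp hp with hp | hp <;>
      obtain ⟨q, hq, rfl⟩ := Multiset.mem_map.mp hp <;>
      have := ih q hq <;> simp <;> omega

lemma aux_count_map_cons (a : Fin d) (M : Multiset (List (Fin d))) (w : List (Fin d)) :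
    (M.map (a :: ·)).count (a :: w) = M.count w :=
  Multiset.count_map_eq_count' _ M (fun x y h => by simpa using h) w

lemma aux_count_map_cons_ne {a c : Fin d} (hac : a ≠ c) (M : Multiset (List (Fin d)))
    (w : List (Fin d)) : (M.map (a :: ·)).count (c :: w) = 0 := by
  rw [Multiset.count_eq_zero]
  intro hmem
  obtain ⟨q, _, hq⟩ := Multiset.mem_map.mp hmem
  rw [List.cons.injEq] at hq
  exact hac hq.1

lemma aux_count_map_cons_nil (a : Fin d) (M : Multiset (List (Fin d))) :
    (M.map (a :: ·)).count [] = 0 := by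
  rw [Multiset.count_eq_zero]
  intro hmem
  obtain ⟨q, _, hq⟩ := Multiset.mem_map.mp hmem
  simp at hq

lemma aux_count_map_fst_nil (a : Fin d) (M : Multiset (List (Fin d) × List (Fin d)))
    (v : List (Fin d)) :
    (M.map (fun p => (a :: p.1, p.2))).count ([], v) = 0 := by
  rw [Multiset.count_eq_zero]
  intro hmem
  obtain ⟨q, _, hq⟩ := Multiset.mem_map.mp hmem
  simp [Prod.ext_iff] at hq

lemma aux_count_map_fst_cons (a c : Fin d) (M : Multiset (List (Fin d) × List (Fin d)))
    (u' v : List (Fin d)) :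
    (M.map (fun p => (a :: p.1, p.2))).count (c :: u', v)
      = if a = c then M.count (u', v) else 0 := by
  by_cases hac : a = c
  · subst hac
    rw [if_pos rfl]
    exact Multiset.count_map_eq_count' _ M
      (fun x y h => by
        simp only [Prod.mk.injEq, List.cons.injEq] at h
        exact Prod.ext h.1.2 h.2) (u', v)
  · rw [if_neg hac, Multiset.count_eq_zero]
    intro hmem
    obtain ⟨q, _, hq⟩ := Multiset.mem_map.mp hmem
    simp [Prod.ext_iff] at hq
    exact hac hq.1.1

lemma aux_count_map_snd_nil (a : Fin d) (M : Multiset (List (Fin d) × List (Fin d)))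
    (u : List (Fin d)) :
    (M.map (fun p => (p.1, a :: p.2))).count (u, []) = 0 := by
  rw [Multiset.count_eq_zero]
  intro hmem
  obtain ⟨q, _, hq⟩ := Multiset.mem_map.mp hmem
  simp [Prod.ext_iff] at hq

lemma aux_count_map_snd_cons (a c : Fin d) (M : Multiset (List (Fin d) × List (Fin d)))
    (u v' : List (Fin d)) :
    (M.map (fun p => (p.1, a :: p.2))).count (u, c :: v')
      = if a = c then M.count (u, v') else 0 := by
  by_cases hac : a = c
  · subst hac
    rw [if_pos rfl]
    exact Multiset.count_map_eq_count' _ M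
      (fun x y h => by
        simp only [Prod.mk.injEq, List.cons.injEq] at h
        exact Prod.ext h.1 h.2.2) (u, v')
  · rw [if_neg hac, Multiset.count_eq_zero]
    intro hmem
    obtain ⟨q, _, hq⟩ := Multiset.mem_map.mp hmem
    simp [Prod.ext_iff] at hq
    exact hac hq.2.1

/-- duality between deshuffles and shuffles -/
lemma aux_count_desh : ∀ (w u v : List (Fin d)),
    (aux_desh w).count (u, v) = (shuffles u v).count w := by
  intro w
  induction w with
  | nil =>
    intro u v
    rw [aux_desh]
    cases u with
    | nil =>
      cases v with
      | nil => simp [aux_shuffles_nil_left]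
      | cons b bs =>
        rw [aux_shuffles_nil_left]
        simp [Multiset.count_singleton]
    | cons c u' =>
      cases v with
      | nil =>
        rw [aux_shuffles_nil_right]
        simp [Multiset.count_singleton]
      | cons b bs =>
        rw [aux_shuffles_cons_cons]
        simp [Multiset.count_singleton, aux_count_map_cons_nil]
  | cons a w ih =>
    intro u v
    rw [aux_desh, Multiset.count_add]
    cases u with
    | nil =>
      rw [aux_count_map_fst_nil]
      cases v with
      | nil =>
        rw [aux_count_map_snd_nil, aux_shuffles_nil_left]
        simp [Multiset.count_singleton]
      | cons b bs =>
        rw [aux_count_map_snd_cons, aux_shuffles_nil_left]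
        by_cases hab : a = b
        · subst hab
          rw [if_pos rfl, ih [] bs, aux_shuffles_nil_left]
          simp [Multiset.count_singleton]
        · rw [if_neg hab]
          simp only [Multiset.count_singleton]
          rw [if_neg (by intro h; rw [List.cons.injEq] at h; exact hab h.1)]
    | cons c u' =>
      rw [aux_count_map_fst_cons]
      cases v with
      | nil =>
        rw [aux_count_map_snd_nil, aux_shuffles_nil_right]
        by_cases hac : a = c
        · subst hac
          rw [if_pos rfl, ih u' [], aux_shuffles_nil_right]
          simp [Multiset.count_singleton]
        · rw [if_neg hac]
          simp only [Multiset.count_singleton]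
          rw [if_neg (by intro h; rw [List.cons.injEq] at h; exact hac h.1)]
      | cons b bs =>
        rw [aux_count_map_snd_cons, aux_shuffles_cons_cons, Multiset.count_add]
        congr 1
        · by_cases hac : a = c
          · subst hac
            rw [if_pos rfl, ih u' (b :: bs), aux_count_map_cons]
          · rw [if_neg hac, aux_count_map_cons_ne (fun h => hac h.symm)]
        · by_cases hab : a = b
          · subst hab
            rw [if_pos rfl, ih (c :: u') bs, aux_count_map_cons]
          · rw [if_neg hab, aux_count_map_cons_ne (fun h => hab h.symm)]

end AuxDynkin
section AuxDynkin2

variable {K : Type*} [Field K] {d : ℕ} {n : ℕ}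

/-- left multiplication as an additive hom -/
def aux_tmulL (f : List (Fin d) → K) : (List (Fin d) → K) →+ (List (Fin d) → K) where
  toFun g := tmul f g
  map_zero' := aux_tmul_zero_right f
  map_add' g h := aux_tmul_add_right f g h

/-- right multiplication as an additive hom -/
def aux_tmulR (g : List (Fin d) → K) : (List (Fin d) → K) →+ (List (Fin d) → K) where
  toFun f := tmul f g
  map_zero' := aux_tmul_zero_left g
  map_add' f h := aux_tmul_add_left f h g

/-- the convolution `id ⋆ S` applied to a word -/
def aux_idS (w : List (Fin d)) : List (Fin d) → K :=
  ((aux_desh w).map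
    (fun p => ((-1 : K) ^ p.2.length) • aux_delta (p.1 ++ p.2.reverse))).sum

/-- the Dynkin convolution `Y ⋆ S` applied to a word -/
def aux_YS (w : List (Fin d)) : List (Fin d) → K :=
  ((aux_desh w).map
    (fun p => ((p.1.length : K) * (-1 : K) ^ p.2.length) • aux_delta (p.1 ++ p.2.reverse))).sum

/-- right-normed bracketing of a word (untruncated) -/
def aux_ram : List (Fin d) → (List (Fin d) → K)
  | [] => 0
  | a :: w => tmul (gen a) (aux_ram w) - tmul (aux_ram w) (gen a)
      + (if w = [] then gen a else 0)

lemma aux_idS_eq : ∀ w : List (Fin d),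
    aux_idS (K := K) w = if w = [] then tone else 0 := by
  intro w
  induction w with
  | nil =>
    rw [aux_idS, aux_desh]
    simp only [Multiset.map_singleton, Multiset.sum_singleton]
    simp [aux_tone_eq_delta]
  | cons a w ih =>
    rw [aux_idS, aux_desh, Multiset.map_add, Multiset.sum_add,
      Multiset.map_map, Multiset.map_map]
    have e1 : ((fun p : List (Fin d) × List (Fin d) =>
          ((-1 : K) ^ p.2.length) • aux_delta (p.1 ++ p.2.reverse)) ∘
        (fun p => (a :: p.1, p.2)))
        = ⇑(aux_tmulL (gen (K := K) a)) ∘ (fun p : List (Fin d) × List (Fin d) =>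
            ((-1 : K) ^ p.2.length) • aux_delta (p.1 ++ p.2.reverse)) := by
      funext p
      show ((-1 : K) ^ p.2.length) • aux_delta ((a :: p.1) ++ p.2.reverse)
        = tmul (gen a) (((-1 : K) ^ p.2.length) • aux_delta (p.1 ++ p.2.reverse))
      rw [aux_tmul_smul_right, aux_gen_eq_delta, aux_tmul_delta_delta]
      rfl
    have e2 : ((fun p : List (Fin d) × List (Fin d) =>
          ((-1 : K) ^ p.2.length) • aux_delta (p.1 ++ p.2.reverse)) ∘
        (fun p => (p.1, a :: p.2)))
        = ⇑(-(aux_tmulR (gen (K := K) a))) ∘ (fun p : List (Fin d) × List (Fin d) =>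
            ((-1 : K) ^ p.2.length) • aux_delta (p.1 ++ p.2.reverse)) := by
      funext p
      show ((-1 : K) ^ (a :: p.2).length) • aux_delta (p.1 ++ (a :: p.2).reverse)
        = -(tmul (((-1 : K) ^ p.2.length) • aux_delta (p.1 ++ p.2.reverse)) (gen a))
      rw [aux_tmul_smul_left, aux_gen_eq_delta, aux_tmul_delta_delta,
        List.reverse_cons, ← List.append_assoc, List.length_cons, pow_succ, ← neg_smul]
      congr 1
      ring
    rw [e1, e2, ← Multiset.map_map, ← Multiset.map_map,
      ← AddMonoidHom.map_multiset_sum, ← AddMonoidHom.map_multiset_sum]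
    show tmul (gen a) (aux_idS w) + (-(tmul (aux_idS w) (gen a))) = _
    rw [ih]
    by_cases hw : w = []
    · subst hw
      rw [if_pos rfl, if_neg (by simp : ¬((a :: ([] : List (Fin d))) = []))]
      rw [aux_tmul_tone_right, aux_tmul_tone_left]
      simp
    · rw [if_neg hw, if_neg (by simp : ¬((a :: w) = []))]
      rw [aux_tmul_zero_right, aux_tmul_zero_left]
      simp

lemma aux_YS_eq : ∀ w : List (Fin d), aux_YS (K := K) w = aux_ram w := by
  intro w
  induction w with
  | nil =>
    rw [aux_YS, aux_desh, aux_ram]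
    simp
  | cons a w ih =>
    rw [aux_YS, aux_desh, Multiset.map_add, Multiset.sum_add,
      Multiset.map_map, Multiset.map_map]
    have e1 : ((fun p : List (Fin d) × List (Fin d) =>
          ((p.1.length : K) * (-1 : K) ^ p.2.length) • aux_delta (p.1 ++ p.2.reverse)) ∘
        (fun p => (a :: p.1, p.2)))
        = ⇑(aux_tmulL (gen (K := K) a)) ∘ (fun p : List (Fin d) × List (Fin d) =>
            (((p.1.length : K) * (-1 : K) ^ p.2.length) • aux_delta (p.1 ++ p.2.reverse)
              + ((-1 : K) ^ p.2.length) • aux_delta (p.1 ++ p.2.reverse))) := by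
      funext p
      show (((a :: p.1).length : K) * (-1 : K) ^ p.2.length) • aux_delta ((a :: p.1) ++ p.2.reverse)
        = tmul (gen a) _
      rw [aux_tmul_add_right, aux_tmul_smul_right, aux_tmul_smul_right,
        aux_gen_eq_delta, aux_tmul_delta_delta, ← add_smul]
      have happ : (([a] : List (Fin d)) ++ (p.1 ++ p.2.reverse)) = (a :: p.1) ++ p.2.reverse := rfl
      rw [happ, List.length_cons]
      congr 1
      push_cast
      ring
    have e2 : ((fun p : List (Fin d) × List (Fin d) =>
          ((p.1.length : K) * (-1 : K) ^ p.2.length) • aux_delta (p.1 ++ p.2.reverse)) ∘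
        (fun p => (p.1, a :: p.2)))
        = ⇑(-(aux_tmulR (gen (K := K) a))) ∘ (fun p : List (Fin d) × List (Fin d) =>
            ((p.1.length : K) * (-1 : K) ^ p.2.length) • aux_delta (p.1 ++ p.2.reverse)) := by
      funext p
      show ((p.1.length : K) * (-1 : K) ^ (a :: p.2).length) • aux_delta (p.1 ++ (a :: p.2).reverse)
        = -(tmul (((p.1.length : K) * (-1 : K) ^ p.2.length) • aux_delta (p.1 ++ p.2.reverse)) (gen a))
      rw [aux_tmul_smul_left, aux_gen_eq_delta, aux_tmul_delta_delta,
        List.reverse_cons, ← List.append_assoc, List.length_cons, pow_succ, ← neg_smul]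
      congr 1
      ring
    rw [e1, e2, ← Multiset.map_map, ← Multiset.map_map,
      ← AddMonoidHom.map_multiset_sum, ← AddMonoidHom.map_multiset_sum]
    show tmul (gen a)
        (((aux_desh w).map (fun p : List (Fin d) × List (Fin d) =>
          ((p.1.length : K) * (-1 : K) ^ p.2.length) • aux_delta (p.1 ++ p.2.reverse)
            + ((-1 : K) ^ p.2.length) • aux_delta (p.1 ++ p.2.reverse))).sum)
        + (-(tmul (aux_YS w) (gen a))) = _
    rw [Multiset.sum_map_add]
    show tmul (gen a) (aux_YS w + aux_idS w) + (-(tmul (aux_YS w) (gen a))) = _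
    rw [ih, aux_idS_eq, aux_ram]
    by_cases hw : w = []
    · subst hw
      rw [if_pos rfl, if_pos rfl]
      have h0 : aux_ram (K := K) (d := d) [] = 0 := rfl
      rw [h0, zero_add, aux_tmul_tone_right, aux_tmul_zero_left, aux_tmul_zero_right]
      simp
    · rw [if_neg hw, if_neg hw, add_zero]
      abel

end AuxDynkin2
section AuxDynkin3

variable {K : Type*} [Field K] {d : ℕ} {n : ℕ}

lemma aux_msum_apply {β : Type*} (M : Multiset β) (F : β → List (Fin d) → K)
    (z : List (Fin d)) : (M.map F).sum z = (M.map (fun b => F b z)).sum := by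
  refine Multiset.induction_on M ?_ ?_
  · simp
  · intro b M ih
    simp [ih]

lemma aux_YS_ne {w z : List (Fin d)} (h : z.length ≠ w.length) :
    aux_YS (K := K) w z = 0 := by
  rw [aux_YS, aux_msum_apply]
  apply Multiset.sum_eq_zero
  intro t ht
  obtain ⟨p, hp, rfl⟩ := Multiset.mem_map.mp ht
  have hne : z ≠ p.1 ++ p.2.reverse := by
    intro hz
    apply h
    rw [hz]
    have := aux_desh_len w p hp
    simp [List.length_append, List.length_reverse]
    omega
  show (_ • aux_delta (p.1 ++ p.2.reverse)) z = 0
  simp [aux_delta, hne]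

lemma aux_ram_ne {w z : List (Fin d)} (h : z.length ≠ w.length) :
    aux_ram (K := K) w z = 0 := by
  rw [← aux_YS_eq]
  exact aux_YS_ne h

lemma aux_msum_ite {β : Type*} [DecidableEq β] (M : Multiset β) (q : β) (c : β → K) :
    ((M.map (fun p => if p = q then c p else 0)).sum) = c q * (M.count q : K) := by
  refine Multiset.induction_on M ?_ ?_
  · simp
  · intro b M ih
    rw [Multiset.map_cons, Multiset.sum_cons, ih, Multiset.count_cons]
    by_cases hb : b = q
    · subst hb
      simp only [if_pos rfl]
      push_cast
      ring
    · rw [if_neg hb, if_neg (fun h => hb h.symm)]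
      push_cast
      ring

lemma aux_msum_finsum {β γ : Type*} (M : Multiset β) (s : Finset γ) (g : γ → β → K) :
    (M.map (fun p => ∑ i ∈ s, g i p)).sum = ∑ i ∈ s, (M.map (g i)).sum := by
  refine Multiset.induction_on M ?_ ?_
  · simp
  · intro b M ih
    simp [ih, Finset.sum_add_distrib]

lemma aux_YS_apply (w z : List (Fin d)) :
    aux_YS (K := K) w z = ∑ i ∈ Finset.range (z.length + 1),
      (i : K) * (-1 : K) ^ (z.length - i)
        * (((aux_desh w).count (z.take i, (z.drop i).reverse)) : K) := by
  rw [aux_YS, aux_msum_apply]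
  have e1 : (aux_desh w).map
      (fun p => ((((p.1.length : K)) * (-1 : K) ^ p.2.length) • aux_delta (p.1 ++ p.2.reverse)) z)
      = (aux_desh w).map
        (fun p => ∑ i ∈ Finset.range (z.length + 1),
          (if p = (z.take i, (z.drop i).reverse)
            then ((p.1.length : K)) * (-1 : K) ^ p.2.length else 0)) := by
    apply Multiset.map_congr rfl
    intro p _
    rw [Pi.smul_apply, smul_eq_mul]
    by_cases hz : z = p.1 ++ p.2.reverse
    · have hp1 : p.1 = z.take p.1.length := by
        rw [hz, List.take_left]
      have hp2 : p.2 = (z.drop p.1.length).reverse := by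
        rw [hz, List.drop_left, List.reverse_reverse]
      have hle : p.1.length ≤ z.length := by
        rw [hz]; simp [List.length_append]
      rw [Finset.sum_eq_single p.1.length]
      · rw [if_pos (Prod.ext hp1 hp2), aux_delta, if_pos hz, mul_one]
      · intro i hi hne
        rw [if_neg]
        intro hpe
        apply hne
        have : p.1.length = (z.take i).length := by rw [hpe]
        rw [List.length_take] at this
        have := Finset.mem_range.mp hi
        omega
      · intro hmem
        exact absurd (Finset.mem_range.mpr (by omega)) hmem
    · rw [aux_delta, if_neg hz, mul_zero]
      symm
      apply Finset.sum_eq_zero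
      intro i _
      rw [if_neg]
      intro hpe
      apply hz
      rw [hpe]
      show z = z.take i ++ ((z.drop i).reverse).reverse
      rw [List.reverse_reverse, List.take_append_drop]
  rw [e1, aux_msum_finsum]
  apply Finset.sum_congr rfl
  intro i hi
  have hi' : i ≤ z.length := by have := Finset.mem_range.mp hi; omega
  rw [aux_msum_ite (aux_desh w) (z.take i, (z.drop i).reverse)
    (fun p => ((p.1.length : K)) * (-1 : K) ^ p.2.length)]
  simp only [List.length_take, List.length_reverse, List.length_drop]
  rw [Nat.min_eq_left hi']

/-- all words of length m -/
def aux_words (d : ℕ) : ℕ → Finset (List (Fin d))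
  | 0 => {[]}
  | m + 1 => ((Finset.univ : Finset (Fin d)) ×ˢ aux_words d m).image (fun q => q.1 :: q.2)

lemma aux_mem_words : ∀ (m : ℕ) (w : List (Fin d)), w ∈ aux_words d m ↔ w.length = m := by
  intro m
  induction m with
  | zero =>
    intro w
    simp [aux_words, List.length_eq_zero_iff]
  | succ m ih =>
    intro w
    rw [aux_words]
    constructor
    · intro hw
      obtain ⟨q, hq, rfl⟩ := Finset.mem_image.mp hw
      have := (ih q.2).mp (Finset.mem_product.mp hq).2
      simp [this]
    · intro hw
      cases w with
      | nil => simp at hw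
      | cons a w' =>
        apply Finset.mem_image.mpr
        refine ⟨(a, w'), ?_, rfl⟩
        apply Finset.mem_product.mpr
        refine ⟨Finset.mem_univ a, (ih w').mpr ?_⟩
        simpa using hw

/-- all words of length between 1 and n -/
def aux_wordsUpTo (d n : ℕ) : Finset (List (Fin d)) :=
  (Finset.Icc 1 n).biUnion (aux_words d)

lemma aux_mem_wordsUpTo {w : List (Fin d)} :
    w ∈ aux_wordsUpTo d n ↔ 1 ≤ w.length ∧ w.length ≤ n := by
  rw [aux_wordsUpTo, Finset.mem_biUnion]
  constructor
  · rintro ⟨m, hm, hw⟩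
    rw [aux_mem_words] at hw
    rw [Finset.mem_Icc] at hm
    omega
  · intro ⟨h1, h2⟩
    exact ⟨w.length, Finset.mem_Icc.mpr ⟨h1, h2⟩, (aux_mem_words _ _).mpr rfl⟩

lemma aux_sum_words_count (x : List (Fin d) → K) (u v : List (Fin d))
    (h1 : 1 ≤ u.length + v.length) (h2 : u.length + v.length ≤ n) :
    (∑ w ∈ aux_wordsUpTo d n, x w * ((shuffles u v).count w : K)) = shuffleForm x u v := by
  rw [shuffleForm, Finset.sum_multiset_map_count]
  have hsub : (shuffles u v).toFinset ⊆ aux_wordsUpTo d n := by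
    intro w hw
    rw [Multiset.mem_toFinset] at hw
    have := aux_length_shuffles u v w hw
    exact aux_mem_wordsUpTo.mpr (by omega)
  have hzero : ∀ w ∈ aux_wordsUpTo d n, w ∉ (shuffles u v).toFinset →
      (Multiset.count w (shuffles u v)) • x w = 0 := by
    intro w _ hw
    rw [Multiset.count_eq_zero_of_notMem (fun hmem => hw (Multiset.mem_toFinset.mpr hmem))]
    simp
  rw [Finset.sum_subset hsub hzero]
  apply Finset.sum_congr rfl
  intro w _
  rw [nsmul_eq_mul]
  ring

/-- truncated right-normed bracketing -/
def aux_ramT (n : ℕ) : List (Fin d) → (List (Fin d) → K)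
  | [] => 0
  | a :: w => lieT n (gen a) (aux_ramT n w) + (if w = [] then gen a else 0)

lemma aux_ramT_inlie : ∀ w : List (Fin d), InLie d n K (aux_ramT n w) := by
  intro w
  induction w with
  | nil => exact InLie.zero
  | cons a w ih =>
    rw [aux_ramT]
    apply InLie.add (InLie.bracket (InLie.gen a) ih)
    by_cases h : w = []
    · rw [if_pos h]; exact InLie.gen a
    · rw [if_neg h]; exact InLie.zero

lemma aux_gen_ne {a : Fin d} {z : List (Fin d)} (h : z.length ≠ 1) :
    gen (K := K) a z = 0 := by
  have : z ≠ [a] := by intro hz; rw [hz] at h; simp at h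
  simp [gen, this]

lemma aux_tmul_homog {f g : List (Fin d) → K} {p q : ℕ}
    (hf : ∀ z : List (Fin d), z.length ≠ p → f z = 0)
    (hg : ∀ z : List (Fin d), z.length ≠ q → g z = 0) :
    ∀ z : List (Fin d), z.length ≠ p + q → tmul f g z = 0 := by
  intro z hz
  rw [tmul]
  apply Finset.sum_eq_zero
  intro i hi
  have hi' : i ≤ z.length := by have := Finset.mem_range.mp hi; omega
  by_cases h1 : (z.take i).length = p
  · by_cases h2 : (z.drop i).length = q
    · exfalso
      rw [List.length_take, Nat.min_eq_left hi'] at h1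
      rw [List.length_drop] at h2
      omega
    · rw [hg _ h2, mul_zero]
  · rw [hf _ h1, zero_mul]

lemma aux_trunc_eq_of_homog {h : List (Fin d) → K} {p : ℕ} (hpn : p ≤ n)
    (hh : ∀ z : List (Fin d), z.length ≠ p → h z = 0) : trunc n h = h := by
  funext z
  rw [trunc]
  by_cases hz : z.length ≤ n
  · rw [if_pos hz]
  · rw [if_neg hz, hh z (by omega)]

lemma aux_ramT_eq : ∀ w : List (Fin d), w.length ≤ n →
    aux_ramT (K := K) n w = aux_ram w := by
  intro w
  induction w with
  | nil => intro _; rfl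
  | cons a w ih =>
    intro hw
    rw [List.length_cons] at hw
    rw [aux_ramT, aux_ram, ih (by omega)]
    congr 1
    rw [lieT, tmulT, tmulT]
    congr 1
    · exact aux_trunc_eq_of_homog (p := 1 + w.length) (by omega)
        (aux_tmul_homog (p := 1) (q := w.length)
          (fun z hz => aux_gen_ne hz) (fun z hz => aux_ram_ne hz))
    · have := aux_trunc_eq_of_homog (n := n) (p := w.length + 1)
        (h := tmul (aux_ram (K := K) w) (gen a)) (by omega)
        (aux_tmul_homog (p := w.length) (q := 1)
          (fun z hz => aux_ram_ne hz) (fun z hz => aux_gen_ne hz))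
      exact this

end AuxDynkin3
section AuxMaster

variable {K : Type*} [Field K] [CharZero K] {d : ℕ} {n : ℕ}

lemma aux_prim_to_inlie {x : List (Fin d) → K} (hx : IsPrim n x)
    (hsupp : ∀ z : List (Fin d), n < z.length → x z = 0) : InLie d n K x := by
  have hLie : InLie d n K
      (∑ w ∈ aux_wordsUpTo d n, ((w.length : K)⁻¹ * x w) • aux_ramT n w) := by
    refine Finset.sum_induction _ (fun y => InLie d n K y)
      (fun a b ha hb => InLie.add ha hb) InLie.zero ?_
    intro w _
    exact InLie.smul _ (aux_ramT_inlie w)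
  suffices hxL : x = ∑ w ∈ aux_wordsUpTo d n, ((w.length : K)⁻¹ * x w) • aux_ramT n w by
    rw [hxL]; exact hLie
  funext z
  rw [Finset.sum_apply]
  have hsummand : ∀ w ∈ aux_wordsUpTo d n,
      (((w.length : K)⁻¹ * x w) • aux_ramT n w) z
        = (z.length : K)⁻¹ * (x w * aux_YS w z) := by
    intro w hw
    obtain ⟨hw1, hw2⟩ := aux_mem_wordsUpTo.mp hw
    rw [Pi.smul_apply, smul_eq_mul, aux_ramT_eq w hw2, ← aux_YS_eq]
    by_cases hlen : z.length = w.length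
    · rw [hlen]; ring
    · rw [aux_YS_ne hlen, mul_zero, mul_zero, mul_zero]
  rw [Finset.sum_congr rfl hsummand, ← Finset.mul_sum]
  by_cases hz0 : z.length = 0
  · have hz : z = [] := List.eq_nil_of_length_eq_zero hz0
    subst hz
    rw [hx.1]
    have hzz : ∀ w ∈ aux_wordsUpTo d n, x w * aux_YS (K := K) w [] = 0 := by
      intro w hw
      obtain ⟨hw1, _⟩ := aux_mem_wordsUpTo.mp hw
      rw [aux_YS_ne (show ([] : List (Fin d)).length ≠ w.length by simp; omega), mul_zero]
    rw [Finset.sum_congr rfl hzz]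
    simp
  by_cases hzn : n < z.length
  · rw [hsupp z hzn]
    have hzz : ∀ w ∈ aux_wordsUpTo d n, x w * aux_YS (K := K) w z = 0 := by
      intro w hw
      obtain ⟨_, hw2⟩ := aux_mem_wordsUpTo.mp hw
      rw [aux_YS_ne (by omega), mul_zero]
    rw [Finset.sum_congr rfl hzz]
    simp
  push_neg at hzn
  have hz1 : 1 ≤ z.length := by omega
  have hYS : ∀ w ∈ aux_wordsUpTo d n, x w * aux_YS (K := K) w z
      = ∑ i ∈ Finset.range (z.length + 1),
          (i : K) * (-1 : K) ^ (z.length - i)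
            * (x w * ((shuffles (z.take i) ((z.drop i).reverse)).count w : K)) := by
    intro w _
    rw [aux_YS_apply, Finset.mul_sum]
    apply Finset.sum_congr rfl
    intro i _
    rw [aux_count_desh]
    ring
  rw [Finset.sum_congr rfl hYS, Finset.sum_comm]
  have hinner : ∀ i ∈ Finset.range (z.length + 1),
      (∑ w ∈ aux_wordsUpTo d n, (i : K) * (-1 : K) ^ (z.length - i)
        * (x w * ((shuffles (z.take i) ((z.drop i).reverse)).count w : K)))
      = (i : K) * (-1 : K) ^ (z.length - i)
          * shuffleForm x (z.take i) ((z.drop i).reverse) := by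
    intro i hi
    have hi' : i ≤ z.length := by have := Finset.mem_range.mp hi; omega
    rw [← Finset.mul_sum]
    congr 1
    apply aux_sum_words_count x (z.take i) ((z.drop i).reverse) <;>
      simp only [List.length_take, List.length_reverse, List.length_drop,
        Nat.min_eq_left hi'] <;> omega
  rw [Finset.sum_congr rfl hinner]
  have hterm : ∀ i ∈ Finset.range (z.length + 1),
      (i : K) * (-1 : K) ^ (z.length - i) * shuffleForm x (z.take i) ((z.drop i).reverse)
      = if i = z.length then (z.length : K) * x z else 0 := by
    intro i hi
    have hi' : i ≤ z.length := by have := Finset.mem_range.mp hi; omega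
    by_cases hiz : i = z.length
    · subst hiz
      rw [List.take_length, List.drop_length, if_pos rfl]
      simp [aux_sf_nil_right]
    · rcases Nat.eq_zero_or_pos i with rfl | hipos
      · simp [if_neg hiz]
      · have h1 : z.take i ≠ [] := by
          intro h
          have h2 : min i z.length = 0 := by
            simpa [List.length_take] using congrArg List.length h
          omega
        have h2 : (z.drop i).reverse ≠ [] := by
          intro h
          have h3 : z.length - i = 0 := by
            simpa [List.length_drop] using congrArg List.length h
          omega
        rw [hx.2 _ _ h1 h2 (by
            simp only [List.length_take, List.length_reverse, List.length_drop,
              Nat.min_eq_left hi']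
            omega),
          mul_zero, if_neg hiz]
  rw [Finset.sum_congr rfl hterm, aux_sum_ite_single _ _ z.length (le_refl _)]
  have hnz : (z.length : K) ≠ 0 := Nat.cast_ne_zero.mpr (by omega)
  field_simp

end AuxMaster
section AuxFinal

variable {K : Type*} [Field K] [CharZero K] {d : ℕ} {n : ℕ}

lemma aux_texp_nil {L : List (Fin d) → K} (hL : L [] = 0) : texp n L [] = 1 := by
  rw [aux_texp_apply]
  rw [Finset.sum_eq_single 0]
  · simp [aux_powT_nil hL]
  · intro r _ hr
    rw [aux_powT_nil hL, if_neg hr, mul_zero]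
  · intro h
    exact absurd (Finset.mem_range.mpr (by omega)) h

lemma aux_texp_support {L : List (Fin d) → K} (hL : L [] = 0) :
    ∀ z : List (Fin d), n < z.length → texp n L z = 0 := by
  intro z hz
  rw [aux_texp_apply]
  apply Finset.sum_eq_zero
  intro r _
  rcases Nat.eq_zero_or_pos r with rfl | hr
  · have : z ≠ [] := by intro h; rw [h] at hz; simp at hz
    simp [powT, tone, this]
  · obtain ⟨r', rfl⟩ := Nat.exists_eq_add_of_le hr
    have : powT n L (1 + r') z = 0 := by
      rw [show 1 + r' = r' + 1 from by omega]
      show trunc n (tmul L (powT n L r')) z = 0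
      rw [trunc]
      rw [if_neg (show ¬z.length ≤ n from by omega)]
    rw [this, mul_zero]

lemma aux_powT_perturb {L D : List (Fin d) → K} (hL : L [] = 0) {m : ℕ}
    (hD : ∀ z : List (Fin d), z.length ≠ m + 1 → D z = 0) (hmn : m + 1 ≤ n) :
    ∀ r (z : List (Fin d)), z.length ≤ m + 1 →
      powT n (L + D) r z = powT n L r z + (if r = 1 then D z else 0) := by
  intro r
  induction r with
  | zero => intro z _; simp [powT]
  | succ r ih =>
    intro z hz
    have hzn : z.length ≤ n := le_trans hz hmn
    show trunc n (tmul (L + D) (powT n (L + D) r)) z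
      = trunc n (tmul L (powT n L r)) z + _
    rw [aux_trunc_apply_of_le _ hzn, aux_trunc_apply_of_le _ hzn, tmul, tmul]
    have hpt : ∀ i ∈ Finset.range (z.length + 1),
        (L + D) (z.take i) * powT n (L + D) r (z.drop i)
        = L (z.take i) * powT n L r (z.drop i)
          + (if i = z.length ∧ z.length = m + 1 ∧ r = 0 then D z else 0) := by
      intro i hi
      have hi' : i ≤ z.length := by have := Finset.mem_range.mp hi; omega
      rw [ih (z.drop i) (by simp [List.length_drop]; omega), Pi.add_apply]
      by_cases hc : i = z.length ∧ z.length = m + 1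
      · obtain ⟨rfl, hzm⟩ := hc
        rw [List.take_length, List.drop_length, aux_powT_nil hL]
        have hD0 : D ([] : List (Fin d)) = 0 := hD [] (by simp)
        by_cases hr0 : r = 0
        · subst hr0
          rw [if_pos rfl, if_neg (show ¬(0 : ℕ) = 1 from by omega), if_pos ⟨rfl, hzm, rfl⟩]
          ring
        · rw [if_neg hr0,
            if_neg (show ¬(z.length = z.length ∧ z.length = m + 1 ∧ r = 0) from
              fun h => hr0 h.2.2)]
          by_cases hr1 : r = 1
          · rw [if_pos hr1, hD0]
            ring
          · rw [if_neg hr1]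
            ring
      · have htne : D (z.take i) = 0 := by
          apply hD
          rw [List.length_take, Nat.min_eq_left hi']
          intro h
          exact hc ⟨by omega, by omega⟩
        rw [htne, add_zero,
          if_neg (show ¬(i = z.length ∧ z.length = m + 1 ∧ r = 0) from
            fun h => hc ⟨h.1, h.2.1⟩), add_zero, mul_add]
        have hsnd : L (z.take i) * (if r = 1 then D (z.drop i) else 0) = 0 := by
          by_cases hr1 : r = 1
          · rw [if_pos hr1]
            by_cases hdz : (z.drop i).length = m + 1
            · have hi0 : i = 0 := by rw [List.length_drop] at hdz; omega
              subst hi0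
              rw [List.take_zero, hL, zero_mul]
            · rw [hD _ hdz, mul_zero]
          · rw [if_neg hr1, mul_zero]
        rw [hsnd, add_zero]
    rw [Finset.sum_congr rfl hpt, Finset.sum_add_distrib]
    congr 1
    have hite : (∑ i ∈ Finset.range (z.length + 1),
        if i = z.length ∧ z.length = m + 1 ∧ r = 0 then D z else 0)
        = if r + 1 = 1 then D z else 0 := by
      by_cases hc : z.length = m + 1 ∧ r = 0
      · have e : ∀ i ∈ Finset.range (z.length + 1),
            (if i = z.length ∧ z.length = m + 1 ∧ r = 0 then D z else 0)
            = if i = z.length then D z else 0 := by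
          intro i _
          by_cases hi : i = z.length
          · rw [if_pos ⟨hi, hc.1, hc.2⟩, if_pos hi]
          · rw [if_neg (fun h => hi h.1), if_neg hi]
        rw [Finset.sum_congr rfl e, aux_sum_ite_single _ _ z.length (le_refl _),
          if_pos (by omega)]
      · have e : ∀ i ∈ Finset.range (z.length + 1),
            (if i = z.length ∧ z.length = m + 1 ∧ r = 0 then D z else 0) = 0 := by
          intro i _
          rw [if_neg (fun h => hc ⟨h.2.1, h.2.2⟩)]
        rw [Finset.sum_congr rfl e]
        simp only [Finset.sum_const_zero]
        by_cases hr : r = 0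
        · rw [if_pos (by omega)]
          exact (hD z (by omega)).symm
        · rw [if_neg (by omega)]
    exact hite

lemma aux_texp_perturb {L D : List (Fin d) → K} (hL : L [] = 0) {m : ℕ}
    (hD : ∀ z : List (Fin d), z.length ≠ m + 1 → D z = 0) (hmn : m + 1 ≤ n) :
    ∀ z : List (Fin d), z.length ≤ m + 1 → texp n (L + D) z = texp n L z + D z := by
  intro z hz
  rw [aux_texp_apply, aux_texp_apply]
  have e : ∀ r ∈ Finset.range (n + 1),
      (r.factorial : K)⁻¹ * powT n (L + D) r z
      = (r.factorial : K)⁻¹ * powT n L r z + (if r = 1 then D z else 0) := by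
    intro r _
    rw [aux_powT_perturb hL hD hmn r z hz, mul_add]
    by_cases hr : r = 1
    · subst hr
      simp [Nat.factorial]
    · simp [hr]
  rw [Finset.sum_congr rfl e, Finset.sum_add_distrib,
    aux_sum_ite_single (D z) n 1 (by omega)]

end AuxFinal
/-- Group-like elements of `T^n(ℝ^d)` are characterized by multiplicativity of the
shuffle forms: `P` with constant term `1` equals `exp(L)` for some Lie polynomial
`L ∈ Lie^n(ℝ^d)` if and only if `σ_{I ⧢ J}(P) = σ_I(P)·σ_J(P)` for all words `I, J`
with `|I| + |J| ≤ n`. -/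
theorem grouplike_iff_shuffle_multiplicative (d n : ℕ) (P : List (Fin d) → ℝ)
    (h1 : P [] = 1) (htr : ∀ l : List (Fin d), n < l.length → P l = 0) :
    (∃ L : List (Fin d) → ℝ, InLie d n ℝ L ∧ P = texp n L) ↔
      ∀ I J : List (Fin d), I.length + J.length ≤ n →
        shuffleForm P I J = P I * P J := by
  constructor
  · rintro ⟨L, hL, rfl⟩
    intro I J hIJ
    exact aux_texp_mult_of_prim (aux_inlie_prim hL) I J hIJ
  · intro hmult
    let Ls : ℕ → (List (Fin d) → ℝ) := fun m =>
      Nat.rec (0 : List (Fin d) → ℝ)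
        (fun m Lm => Lm + fun z => if z.length = m + 1 then P z - texp n Lm z else 0) m
    have key : ∀ m : ℕ, m ≤ n → InLie d n ℝ (Ls m)
        ∧ (∀ z : List (Fin d), z.length ≤ m → texp n (Ls m) z = P z)
        ∧ (∀ z : List (Fin d), z.length = 0 ∨ m < z.length → Ls m z = 0) := by
      intro m
      induction m with
      | zero =>
        intro _
        have hLs0 : Ls 0 = 0 := rfl
        refine ⟨hLs0 ▸ InLie.zero, ?_, ?_⟩
        · intro z hz
          have hznil : z = [] := List.eq_nil_of_length_eq_zero (by omega)
          subst hznil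
          rw [h1, hLs0]
          exact aux_texp_nil rfl
        · intro z _
          rfl
      | succ m ih =>
        intro hmn
        obtain ⟨hlie, hagree, hsupp⟩ := ih (by omega)
        set D : List (Fin d) → ℝ :=
          fun z => if z.length = m + 1 then P z - texp n (Ls m) z else 0 with hDdef
        have hLsD : Ls (m + 1) = Ls m + D := rfl
        have hDsupp : ∀ z : List (Fin d), z.length ≠ m + 1 → D z = 0 := fun z hz => if_neg hz
        have hL0 : Ls m [] = 0 := hsupp [] (Or.inl rfl)
        have htexp := aux_texp_perturb hL0 hDsupp hmn
        have hDprim : IsPrim n D := by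
          constructor
          · exact hDsupp [] (by simp)
          · intro I J hI hJ hIJ
            by_cases hs : I.length + J.length = m + 1
            · have e : shuffleForm D I J = shuffleForm (P - texp n (Ls m)) I J := by
                apply aux_sf_congr
                intro w hw
                show (if w.length = m + 1 then P w - texp n (Ls m) w else 0) = _
                rw [if_pos (by omega)]
                rfl
              have hIlen : I.length ≤ m := by have := List.length_pos_iff.mpr hJ; omega
              have hJlen : J.length ≤ m := by have := List.length_pos_iff.mpr hI; omega
              rw [e, aux_sf_sub, hmult I J hIJ,
                aux_texp_mult_of_prim (aux_inlie_prim hlie) I J hIJ,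
                hagree I hIlen, hagree J hJlen]
              ring
            · have e : shuffleForm D I J = shuffleForm (0 : List (Fin d) → ℝ) I J := by
                apply aux_sf_congr
                intro w hw
                rw [hDsupp w (by omega)]
                rfl
              rw [e, aux_sf_zero]
        have hDlie : InLie d n ℝ D :=
          aux_prim_to_inlie hDprim (fun z hz => hDsupp z (by omega))
        refine ⟨?_, ?_, ?_⟩
        · rw [hLsD]
          exact InLie.add hlie hDlie
        · intro z hz
          rw [hLsD, htexp z hz]
          by_cases hzm : z.length ≤ m
          · rw [hDsupp z (by omega), add_zero, hagree z hzm]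
          · have hzl : z.length = m + 1 := by omega
            show texp n (Ls m) z
              + (if z.length = m + 1 then P z - texp n (Ls m) z else 0) = P z
            rw [if_pos hzl]
            ring
        · intro z hz
          rw [hLsD, Pi.add_apply]
          have h1' : Ls m z = 0 := hsupp z (by omega)
          have h2' : D z = 0 := hDsupp z (by omega)
          rw [h1', h2', add_zero]
    obtain ⟨hlie, hagree, hsupp⟩ := key n (le_refl n)
    refine ⟨Ls n, hlie, ?_⟩
    funext z
    by_cases hz : z.length ≤ n
    · exact (hagree z hz).symm
    · rw [htr z (by omega), aux_texp_support (hsupp [] (Or.inl rfl)) z (by omega)]
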